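/- Let (X, 𝓑, m) be a probability space, π : X → Σ a measurable map onto a measurable space Σ, and 𝓒 ∈ 𝓑 with m(𝓒) > 0. Let μ_𝓑 = π_*(m) and μ_𝓒 = π_*(m|_𝓒). Then μ_𝓒 is absolutely continuous with respect to μ_𝓑, and if {m_ξ}_{ξ∈Σ} is a disintegration of m over π, then {(dμ_𝓑/dμ_𝓒)(ξ) · m_ξ|_𝓒}_{ξ} is a disintegration of m|_𝓒 over π (for μ_𝓒-almost every ξ). -/

import Mathlib

open ENNReal MeasureTheory

/-- `mξ` is a disintegration of `m` over the map `π`: the fiber measures are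
probabilities supported on fibers, and `m` is recovered by integrating them
against the pushforward `m.map π`. -/
def IsDisintegration {X S : Type*} [MeasurableSpace X] [MeasurableSpace S]
    [MeasurableSingletonClass S] (m : Measure X) (π : X → S) (mξ : S → Measure X) : Prop :=
  (∀ ξ, IsProbabilityMeasure (mξ ξ)) ∧
  (∀ᵐ ξ ∂(m.map π), mξ ξ (π ⁻¹' {ξ}) = 1) ∧
  (∀ E : Set X, MeasurableSet E → m E = ∫⁻ ξ, mξ ξ E ∂(m.map π))

theorem stmt_12 {X S : Type*} [MeasurableSpace X] [MeasurableSpace S]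
    [MeasurableSingletonClass S]
    (m : Measure X) [IsProbabilityMeasure m] (π : X → S) (hπ : Measurable π)
    (C : Set X) (hC : MeasurableSet C) (hCpos : 0 < m C)
    (mξ : S → Measure X) (hdis : IsDisintegration m π mξ) :
    ((m.restrict C).map π) ≪ (m.map π) ∧
    ((∀ᵐ ξ ∂((m.restrict C).map π),
        ((m.map π).rnDeriv ((m.restrict C).map π) ξ • (mξ ξ).restrict C) (π ⁻¹' {ξ})
          = 1) ∧
      (∀ E : Set X, MeasurableSet E →
        (m.restrict C) E =
          ∫⁻ ξ, ((m.map π).rnDeriv ((m.restrict C).map π) ξ • (mξ ξ).restrict C) E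
            ∂((m.restrict C).map π))) := by
  classical
  obtain ⟨hprob, hfiber, hint⟩ := hdis
  set μ := m.map π with hμdef
  set ν := (m.restrict C).map π with hνdef
  set f := μ.rnDeriv ν with hfdef
  have hfm : Measurable f := Measure.measurable_rnDeriv μ ν
  haveI : IsProbabilityMeasure μ := Measure.isProbabilityMeasure_map hπ.aemeasurable
  haveI : IsFiniteMeasure ν := by
    constructor
    rw [hνdef, Measure.map_apply hπ MeasurableSet.univ]
    exact measure_lt_top _ _
  -- fibers carry full mass: the complements are null
  have hfiberc : ∀ᵐ ξ ∂μ, mξ ξ ((π ⁻¹' {ξ})ᶜ) = 0 := by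
    filter_upwards [hfiber] with ξ h
    haveI := hprob ξ
    rw [measure_compl (hπ (measurableSet_singleton ξ)) (measure_ne_top _ _), h, measure_univ,
      tsub_self]
  -- intersecting with a conull fiber does not change the measure
  have hketc : ∀ ξ, mξ ξ ((π ⁻¹' {ξ})ᶜ) = 0 → ∀ D : Set X,
      mξ ξ (D ∩ π ⁻¹' {ξ}) = mξ ξ D := by
    intro ξ h0 D
    have h1 : mξ ξ (D ∩ π ⁻¹' {ξ}) + mξ ξ (D \ π ⁻¹' {ξ}) = mξ ξ D :=
      measure_inter_add_diff D (hπ (measurableSet_singleton ξ))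
    have h2 : mξ ξ (D \ π ⁻¹' {ξ}) = 0 :=
      measure_mono_null (fun x hx => hx.2) h0
    rw [h2, add_zero] at h1
    exact h1
  set κ : S → ℝ≥0∞ := fun ξ => mξ ξ C with hκdef
  set κ' : S → ℝ≥0∞ := fun ξ => mξ ξ Cᶜ with hκ'def
  have hκle1 : ∀ ξ, κ ξ ≤ 1 := fun ξ => by haveI := hprob ξ; exact prob_le_one
  have hκκ' : ∀ ξ, κ ξ + κ' ξ = 1 := fun ξ => by
    haveI := hprob ξ
    rw [hκdef, hκ'def]
    simp only
    rw [measure_add_measure_compl hC, measure_univ]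
  obtain ⟨k₁, hk₁m, hk₁le, hk₁int⟩ := exists_measurable_le_lintegral_eq μ κ
  obtain ⟨l₁, hl₁m, hl₁le, hl₁int⟩ := exists_measurable_le_lintegral_eq μ κ'
  have hk₁le1 : ∀ ξ, k₁ ξ ≤ 1 := fun ξ => (hk₁le ξ).trans (hκle1 ξ)
  have hk₁top : ∀ ξ, k₁ ξ ≠ ∞ := fun ξ => ((hk₁le1 ξ).trans_lt one_lt_top).ne
  have hsum_le : ∀ ξ, k₁ ξ + l₁ ξ ≤ 1 := fun ξ => by
    calc k₁ ξ + l₁ ξ ≤ κ ξ + κ' ξ := add_le_add (hk₁le ξ) (hl₁le ξ)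
    _ = 1 := hκκ' ξ
  have hsum_int : ∫⁻ ξ, (k₁ ξ + l₁ ξ) ∂μ = 1 := by
    rw [lintegral_add_left hk₁m, ← hk₁int, ← hl₁int, ← hint C hC, ← hint Cᶜ hC.compl,
      measure_add_measure_compl hC, measure_univ]
  have hae1 : ∀ᵐ ξ ∂μ, k₁ ξ + l₁ ξ = 1 := by
    have hz : ∫⁻ ξ, (1 - (k₁ ξ + l₁ ξ)) ∂μ = 0 := by
      rw [lintegral_sub (f := fun _ => 1) (g := fun ξ => k₁ ξ + l₁ ξ) (hk₁m.add hl₁m) (by rw [hsum_int]; exact one_ne_top)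
        (Filter.Eventually.of_forall hsum_le), hsum_int, lintegral_one, measure_univ, tsub_self]
    have h0 := (lintegral_eq_zero_iff (measurable_const.sub (hk₁m.add hl₁m))).mp hz
    filter_upwards [h0] with ξ hξ
    have h1 : (1 : ℝ≥0∞) ≤ k₁ ξ + l₁ ξ := tsub_eq_zero_iff_le.mp hξ
    exact le_antisymm (hsum_le ξ) h1
  -- κ agrees a.e. with the measurable k₁
  have hκk₁ : ∀ᵐ ξ ∂μ, κ ξ = k₁ ξ := by
    filter_upwards [hae1] with ξ h
    have hl₁top : l₁ ξ ≠ ∞ := by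
      have : l₁ ξ ≤ 1 := le_trans (le_add_self) (le_of_eq h)
      exact (this.trans_lt one_lt_top).ne
    have h2 : κ ξ + l₁ ξ ≤ k₁ ξ + l₁ ξ := by
      calc κ ξ + l₁ ξ ≤ κ ξ + κ' ξ := add_le_add (le_refl _) (hl₁le ξ)
      _ = 1 := hκκ' ξ
      _ = k₁ ξ + l₁ ξ := h.symm
    have h3 : κ ξ ≤ k₁ ξ := (ENNReal.add_le_add_iff_right hl₁top).mp h2
    exact le_antisymm h3 (hk₁le ξ)
  -- ν has density k₁ with respect to μ
  have hνA : ∀ A : Set S, MeasurableSet A → ν A = ∫⁻ ξ in A, k₁ ξ ∂μ := by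
    intro A hA
    have h1 : ν A = m (π ⁻¹' A ∩ C) := by
      rw [hνdef, Measure.map_apply hπ hA, Measure.restrict_apply (hπ hA)]
    have h2 : m (π ⁻¹' A ∩ C) = ∫⁻ ξ, mξ ξ (π ⁻¹' A ∩ C) ∂μ :=
      hint _ ((hπ hA).inter hC)
    have h3 : (fun ξ => mξ ξ (π ⁻¹' A ∩ C)) =ᵐ[μ] fun ξ => A.indicator k₁ ξ := by
      filter_upwards [hfiberc, hκk₁] with ξ h0 hκξ
      by_cases hξA : ξ ∈ A
      · rw [Set.indicator_of_mem hξA]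
        have e1 : (π ⁻¹' A ∩ C) ∩ π ⁻¹' {ξ} = C ∩ π ⁻¹' {ξ} := by
          ext x
          constructor
          · rintro ⟨⟨_, hxC⟩, hxf⟩; exact ⟨hxC, hxf⟩
          · rintro ⟨hxC, hxf⟩
            refine ⟨⟨?_, hxC⟩, hxf⟩
            have : π x = ξ := hxf
            rw [Set.mem_preimage, this]; exact hξA
        calc mξ ξ (π ⁻¹' A ∩ C) = mξ ξ ((π ⁻¹' A ∩ C) ∩ π ⁻¹' {ξ}) :=
              (hketc ξ h0 _).symm
        _ = mξ ξ (C ∩ π ⁻¹' {ξ}) := by rw [e1]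
        _ = mξ ξ C := hketc ξ h0 C
        _ = k₁ ξ := hκξ
      · rw [Set.indicator_of_notMem hξA]
        refine measure_mono_null ?_ h0
        intro x hx
        simp only [Set.mem_compl_iff, Set.mem_preimage, Set.mem_singleton_iff]
        intro hxξ
        exact hξA (hxξ ▸ hx.1)
    rw [h1, h2, lintegral_congr_ae h3, lintegral_indicator hA k₁]
  have hνwd : ν = μ.withDensity k₁ := by
    ext A hA
    rw [withDensity_apply _ hA, hνA A hA]
  have hνμ : ν ≪ μ := hνwd ▸ withDensity_absolutelyContinuous μ k₁
  have hrn : ν.rnDeriv μ =ᵐ[μ] k₁ := by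
    rw [hνwd]; exact Measure.rnDeriv_withDensity μ hk₁m
  have hfν : f =ᵐ[ν] fun ξ => (k₁ ξ)⁻¹ := by
    have h1 : (ν.rnDeriv μ)⁻¹ =ᵐ[ν] μ.rnDeriv ν := Measure.inv_rnDeriv hνμ
    have h2 : ν.rnDeriv μ =ᵐ[ν] k₁ := hrn.filter_mono hνμ.ae_le
    filter_upwards [h1, h2] with ξ e1 e2
    rw [hfdef, ← e1, Pi.inv_apply, e2]
  have hk₁pos : ∀ᵐ ξ ∂ν, k₁ ξ ≠ 0 := by
    have hz : ν {ξ | k₁ ξ = 0} = 0 := by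
      have hs : MeasurableSet {ξ | k₁ ξ = 0} := hk₁m (measurableSet_singleton 0)
      rw [hνwd, withDensity_apply _ hs,
        setLIntegral_congr_fun (g := fun _ => 0) hs (fun ξ hξ => hξ)]
      simp
    rw [Filter.eventually_iff, mem_ae_iff]
    convert hz using 2
    ext ξ
    simp
  have hκν : ∀ᵐ ξ ∂ν, κ ξ = k₁ ξ := hκk₁.filter_mono hνμ.ae_le
  have hfibercν : ∀ᵐ ξ ∂ν, mξ ξ ((π ⁻¹' {ξ})ᶜ) = 0 := hfiberc.filter_mono hνμ.ae_le
  refine ⟨hνμ, ?_, ?_⟩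
  · -- a.e. the scaled restricted fiber measure is a probability on the fiber
    filter_upwards [hfibercν, hκν, hfν, hk₁pos] with ξ h0 hκξ hfξ hpos
    rw [Measure.smul_apply, Measure.restrict_apply (hπ (measurableSet_singleton ξ)),
      smul_eq_mul, Set.inter_comm, hketc ξ h0 C, hfξ]
    have : mξ ξ C = k₁ ξ := hκξ
    rw [this]
    exact ENNReal.inv_mul_cancel hpos (hk₁top ξ)
  · intro E hE
    haveI : μ.HaveLebesgueDecomposition ν := inferInstance
    have hdec : μ = μ.singularPart ν + ν.withDensity f := μ.haveLebesgueDecomposition_add ν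
    have h1 : (m.restrict C) E = ∫⁻ ξ, mξ ξ (E ∩ C) ∂μ := by
      rw [Measure.restrict_apply hE]
      exact hint (E ∩ C) (hE.inter hC)
    -- singular part contributes nothing
    obtain ⟨T, hTm, hT1, hT2⟩ := μ.mutuallySingular_singularPart ν
    have hk₁T : k₁ =ᵐ[μ.restrict Tᶜ] 0 := by
      have : ∫⁻ ξ in Tᶜ, k₁ ξ ∂μ = 0 := by
        rw [← withDensity_apply _ hTm.compl, ← hνwd]; exact hT2
      exact (lintegral_eq_zero_iff' hk₁m.aemeasurable).mp this
    have hsing : ∫⁻ ξ, mξ ξ (E ∩ C) ∂(μ.singularPart ν) = 0 := by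
      have hle : ∫⁻ ξ, mξ ξ (E ∩ C) ∂(μ.singularPart ν) ≤ ∫⁻ ξ, k₁ ξ ∂(μ.singularPart ν) := by
        refine le_trans (lintegral_mono (fun ξ => measure_mono Set.inter_subset_right)) ?_
        refine le_of_eq (lintegral_congr_ae ?_)
        exact hκk₁.filter_mono (ae_mono (Measure.singularPart_le μ ν))
      have hz : ∫⁻ ξ, k₁ ξ ∂(μ.singularPart ν) = 0 := by
        rw [← lintegral_add_compl k₁ hTm]
        have hzT : ∫⁻ ξ in T, k₁ ξ ∂(μ.singularPart ν) = 0 := by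
          refine le_antisymm ?_ zero_le
          calc ∫⁻ ξ in T, k₁ ξ ∂(μ.singularPart ν) ≤ ∫⁻ _ in T, 1 ∂(μ.singularPart ν) :=
                lintegral_mono (fun ξ => hk₁le1 ξ)
          _ = (μ.singularPart ν) T := by rw [setLIntegral_one]
          _ = 0 := hT1
        have hzTc : ∫⁻ ξ in Tᶜ, k₁ ξ ∂(μ.singularPart ν) = 0 := by
          have hle' : (μ.singularPart ν).restrict Tᶜ ≤ μ.restrict Tᶜ :=
            Measure.restrict_mono (subset_refl _) (Measure.singularPart_le μ ν)
          rw [lintegral_congr_ae (hk₁T.filter_mono (ae_mono hle'))]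
          simp
        rw [hzT, hzTc, add_zero]
      exact le_antisymm (hle.trans (le_of_eq hz)) zero_le
    have hwd : ∫⁻ ξ, mξ ξ (E ∩ C) ∂(ν.withDensity f) = ∫⁻ ξ, f ξ * mξ ξ (E ∩ C) ∂ν :=
      lintegral_withDensity_eq_lintegral_mul_non_measurable ν hfm
        (Measure.rnDeriv_lt_top μ ν) _
    calc (m.restrict C) E = ∫⁻ ξ, mξ ξ (E ∩ C) ∂μ := h1
    _ = ∫⁻ ξ, mξ ξ (E ∩ C) ∂(μ.singularPart ν) + ∫⁻ ξ, mξ ξ (E ∩ C) ∂(ν.withDensity f) := by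
        conv_lhs => rw [hdec]
        exact lintegral_add_measure _ _ _
    _ = ∫⁻ ξ, f ξ * mξ ξ (E ∩ C) ∂ν := by rw [hsing, hwd, zero_add]
    _ = ∫⁻ ξ, (f ξ • (mξ ξ).restrict C) E ∂ν := by
        refine lintegral_congr (fun ξ => ?_)
        rw [Measure.smul_apply, Measure.restrict_apply hE, smul_eq_mul]
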